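/- For all integers n ≥ 0 and k ≥ 0, the number of overpartition (2k+1)-tuples with odd parts satisfies OPT_{2k+1}(8n+2) ≡ 0 (mod 2). -/
import Mathlib


/-- An overpartition with odd parts, encoded as a pair of multisets of odd
(hence positive) integers: the overlined parts (which are distinct, since the
last occurrence of each part size may be overlined) and the non-overlined
parts. -/
def IsOddOverpartition (p : Multiset ℕ × Multiset ℕ) : Prop :=
  p.1.Nodup ∧ (∀ x ∈ p.1, Odd x) ∧ (∀ x ∈ p.2, Odd x)

/-- `OPT k n` is the number of overpartition `k`-tuples of `n` with odd parts,
with generating function `∏_{i≥1} ((1+q^{2i-1})/(1-q^{2i-1}))^k`. -/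
noncomputable def OPT (k n : ℕ) : ℕ :=
  Set.ncard {f : Fin k → Multiset ℕ × Multiset ℕ |
    (∀ i, IsOddOverpartition (f i)) ∧ (∑ i, ((f i).1.sum + (f i).2.sum)) = n}

lemma multiset_sup_mem (s : Multiset ℕ) (h : s ≠ 0) : s.sup ∈ s := by
  induction s using Multiset.induction with
  | empty => exact absurd rfl h
  | cons a s ih =>
    rw [Multiset.sup_cons]
    rcases eq_or_ne s 0 with rfl | hs
    · simp
    · rcases le_total a s.sup with h1 | h1
      · rw [sup_eq_right.mpr h1]; exact Multiset.mem_cons_of_mem (ih hs)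
      · rw [sup_eq_left.mpr h1]; exact Multiset.mem_cons_self a s

lemma multiset_mem_le_sum {s : Multiset ℕ} {a : ℕ} (h : a ∈ s) : a ≤ s.sum := by
  induction s using Multiset.induction with
  | empty => simp at h
  | cons b t ih =>
    rw [Multiset.sum_cons]
    rcases Multiset.mem_cons.mp h with rfl | h
    · exact Nat.le_add_right _ _
    · exact le_trans (ih h) (Nat.le_add_left _ _)

/-- Toggle the overline status of the largest part. -/
def toggle (p : Multiset ℕ × Multiset ℕ) : Multiset ℕ × Multiset ℕ :=
  if (p.1 + p.2).sup ∈ p.1 then (p.1.erase ((p.1 + p.2).sup), (p.1 + p.2).sup ::ₘ p.2)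
  else if (p.1 + p.2).sup ∈ p.2 then ((p.1 + p.2).sup ::ₘ p.1, p.2.erase ((p.1 + p.2).sup))
  else p

lemma toggle_pair (a b : Multiset ℕ) :
    toggle (a, b) =
      if (a + b).sup ∈ a then (a.erase ((a + b).sup), (a + b).sup ::ₘ b)
      else if (a + b).sup ∈ b then ((a + b).sup ::ₘ a, b.erase ((a + b).sup))
      else (a, b) := rfl

lemma toggle_union (p : Multiset ℕ × Multiset ℕ) :
    (toggle p).1 + (toggle p).2 = p.1 + p.2 := by
  obtain ⟨a, b⟩ := p
  rw [toggle_pair]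
  split_ifs with h1 h2
  · show a.erase ((a + b).sup) + ((a + b).sup ::ₘ b) = a + b
    rw [Multiset.add_cons, ← Multiset.cons_add, Multiset.cons_erase h1]
  · show ((a + b).sup ::ₘ a) + b.erase ((a + b).sup) = a + b
    rw [Multiset.cons_add, ← Multiset.add_cons, Multiset.cons_erase h2]
  · rfl

lemma toggle_isOdd {p : Multiset ℕ × Multiset ℕ} (hp : IsOddOverpartition p) :
    IsOddOverpartition (toggle p) := by
  obtain ⟨a, b⟩ := p
  obtain ⟨hnd, h1, h2⟩ := hp
  rw [toggle_pair]
  split_ifs with hc1 hc2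
  · exact ⟨hnd.erase _, fun x hx => h1 x (Multiset.mem_of_mem_erase hx),
      fun x hx => by
        rcases Multiset.mem_cons.mp hx with rfl | hx
        · exact h1 _ hc1
        · exact h2 x hx⟩
  · exact ⟨Multiset.nodup_cons.mpr ⟨hc1, hnd⟩,
      fun x hx => by
        rcases Multiset.mem_cons.mp hx with rfl | hx
        · exact h2 _ hc2
        · exact h1 x hx,
      fun x hx => h2 x (Multiset.mem_of_mem_erase hx)⟩
  · exact ⟨hnd, h1, h2⟩

lemma toggle_toggle {p : Multiset ℕ × Multiset ℕ} (hp : IsOddOverpartition p) :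
    toggle (toggle p) = p := by
  obtain ⟨a, b⟩ := p
  rcases eq_or_ne (a + b) 0 with h0 | h0
  · have h1 : a = 0 := Multiset.le_zero.mp (h0 ▸ (le_add_right le_rfl : a ≤ a + b))
    have h2 : b = 0 := Multiset.le_zero.mp (h0 ▸ (le_add_left le_rfl : b ≤ a + b))
    subst h1; subst h2
    simp [toggle]
  · have hmem := multiset_sup_mem _ h0
    set m := (a + b).sup with hm
    by_cases hc1 : m ∈ a
    · have ht1 : toggle (a, b) = (a.erase m, m ::ₘ b) := by
        rw [toggle_pair, if_pos hc1]
      have key : a.erase m + (m ::ₘ b) = a + b := by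
        rw [Multiset.add_cons, ← Multiset.cons_add, Multiset.cons_erase hc1]
      have hnm : m ∉ a.erase m := hp.1.notMem_erase
      rw [ht1, toggle_pair, key, ← hm, if_neg hnm, if_pos (Multiset.mem_cons_self m b),
        Multiset.cons_erase hc1, Multiset.erase_cons_head]
    · have hc2 : m ∈ b := by
        rcases Multiset.mem_add.mp hmem with h | h
        · exact absurd h hc1
        · exact h
      have ht1 : toggle (a, b) = (m ::ₘ a, b.erase m) := by
        rw [toggle_pair, if_neg hc1, if_pos hc2]
      have key : (m ::ₘ a) + b.erase m = a + b := by
        rw [Multiset.cons_add, ← Multiset.add_cons, Multiset.cons_erase hc2]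
      rw [ht1, toggle_pair, key, ← hm, if_pos (Multiset.mem_cons_self m a),
        Multiset.erase_cons_head, Multiset.cons_erase hc2]

lemma toggle_ne {p : Multiset ℕ × Multiset ℕ} (hp : IsOddOverpartition p)
    (h0 : p.1 + p.2 ≠ 0) : toggle p ≠ p := by
  obtain ⟨a, b⟩ := p
  have hmem := multiset_sup_mem _ h0
  set m := (a + b).sup with hm
  rw [toggle_pair]
  by_cases hc1 : m ∈ a
  · rw [if_pos hc1]
    intro h
    have : (a.erase m) = a := congrArg Prod.fst h
    exact hp.1.notMem_erase (this ▸ hc1)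
  · have hc2 : m ∈ b := by
      rcases Multiset.mem_add.mp hmem with h | h
      · exact absurd h hc1
      · exact h
    rw [if_neg hc1, if_pos hc2]
    intro h
    have : (m ::ₘ a) = a := congrArg Prod.fst h
    exact hc1 (this ▸ Multiset.mem_cons_self m a)

lemma card_le_sum_of_pos (s : Multiset ℕ) (h : ∀ x ∈ s, 1 ≤ x) :
    Multiset.card s ≤ s.sum := by
  induction s using Multiset.induction with
  | empty => simp
  | cons a s ih =>
    rw [Multiset.card_cons, Multiset.sum_cons]
    have := ih (fun x hx => h x (Multiset.mem_cons_of_mem hx))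
    have ha := h a (Multiset.mem_cons_self a s)
    omega

lemma multiset_le_bound {s : Multiset ℕ} {N : ℕ} (hpos : ∀ x ∈ s, 1 ≤ x)
    (hsum : s.sum ≤ N) : s ≤ N • (Multiset.range (N + 1)) := by
  rw [Multiset.le_iff_count]
  intro a
  rw [Multiset.count_nsmul]
  by_cases ha : a ∈ s
  · have h1 : a ≤ s.sum := multiset_mem_le_sum ha
    have h2 : Multiset.count a (Multiset.range (N + 1)) = 1 :=
      Multiset.count_eq_one_of_mem (Multiset.nodup_range (N + 1))
        (Multiset.mem_range.mpr (by omega))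
    rw [h2, mul_one]
    calc Multiset.count a s ≤ Multiset.card s := Multiset.count_le_card a s
      _ ≤ s.sum := card_le_sum_of_pos s hpos
      _ ≤ N := hsum
  · rw [Multiset.count_eq_zero_of_notMem ha]
    exact Nat.zero_le _

/-- For all `n ≥ 0` and `k ≥ 0`, `OPT_{2k+1}(8n+2) ≡ 0 (mod 2)`. -/
theorem opt_odd_tuple_8n_plus_2 (n k : ℕ) :
    OPT (2 * k + 1) (8 * n + 2) ≡ 0 [MOD 2] := by
  set K := 2 * k + 1
  set N := 8 * n + 2 with hN
  set A : Set (Fin K → Multiset ℕ × Multiset ℕ) :=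
    {f | (∀ i, IsOddOverpartition (f i)) ∧ (∑ i, ((f i).1.sum + (f i).2.sum)) = N} with hA
  -- finiteness
  have hTfin : {s : Multiset ℕ | s ≤ N • (Multiset.range (N + 1))}.Finite := by
    apply Set.Finite.ofFinset (N • (Multiset.range (N + 1))).powerset.toFinset
    intro a
    simp [Multiset.mem_powerset]
  have hAfin : A.Finite := by
    apply Set.Finite.subset (Set.Finite.pi (fun _ : Fin K => (hTfin.prod hTfin)))
    intro f hf
    obtain ⟨hf1, hf2⟩ := hf
    intro i _
    have hsle : (f i).1.sum + (f i).2.sum ≤ N := by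
      rw [← hf2]
      exact Finset.single_le_sum (f := fun j => (f j).1.sum + (f j).2.sum)
        (fun j _ => Nat.zero_le _) (Finset.mem_univ i)
    have hpos1 : ∀ x ∈ (f i).1, 1 ≤ x := fun x hx => ((hf1 i).2.1 x hx).pos
    have hpos2 : ∀ x ∈ (f i).2, 1 ≤ x := fun x hx => ((hf1 i).2.2 x hx).pos
    constructor
    · exact multiset_le_bound hpos1 (by omega)
    · exact multiset_le_bound hpos2 (by omega)
  have hOPT : OPT K N = hAfin.toFinset.card := by
    rw [OPT, ← Set.ncard_coe_finset, Set.Finite.coe_toFinset]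
  -- the involution
  set F : (Fin K → Multiset ℕ × Multiset ℕ) → (Fin K → Multiset ℕ × Multiset ℕ) :=
    fun f i => toggle (f i) with hF
  have hFmem : ∀ f ∈ hAfin.toFinset, F f ∈ hAfin.toFinset := by
    intro f hf
    rw [Set.Finite.mem_toFinset] at hf ⊢
    obtain ⟨hf1, hf2⟩ := hf
    refine ⟨fun i => toggle_isOdd (hf1 i), ?_⟩
    rw [← hf2]
    apply Finset.sum_congr rfl
    intro i _
    have h1 := congrArg Multiset.sum (toggle_union (f i))
    rw [Multiset.sum_add, Multiset.sum_add] at h1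
    exact h1
  have hFF : ∀ f ∈ hAfin.toFinset, F (F f) = f := by
    intro f hf
    rw [Set.Finite.mem_toFinset] at hf
    funext i
    exact toggle_toggle (hf.1 i)
  have hFne : ∀ f ∈ hAfin.toFinset, F f ≠ f := by
    intro f hf
    rw [Set.Finite.mem_toFinset] at hf
    obtain ⟨hf1, hf2⟩ := hf
    have : ∃ i, (f i).1 + (f i).2 ≠ 0 := by
      by_contra h
      push_neg at h
      have hz : ∀ i, (f i).1.sum + (f i).2.sum = 0 := by
        intro i
        have h1 : (f i).1 = 0 :=
          Multiset.le_zero.mp ((h i) ▸ (le_add_right le_rfl : (f i).1 ≤ (f i).1 + (f i).2))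
        have h2 : (f i).2 = 0 :=
          Multiset.le_zero.mp ((h i) ▸ (le_add_left le_rfl : (f i).2 ≤ (f i).1 + (f i).2))
        rw [h1, h2]; simp
      rw [Finset.sum_congr rfl (fun i _ => hz i), Finset.sum_const, smul_zero] at hf2
      omega
    obtain ⟨i, hi⟩ := this
    intro h
    exact toggle_ne (hf1 i) hi (congrFun h i)
  -- parity via sum in ZMod 2
  have hsum : (∑ _x ∈ hAfin.toFinset, (1 : ZMod 2)) = 0 := by
    apply Finset.sum_involution (fun f _ => F f)
    · intro a ha; decide
    · intro a ha _; exact hFne a ha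
    · intro a ha; exact hFmem a ha
    · intro a ha; exact hFF a ha
  rw [Finset.sum_const, nsmul_eq_mul, mul_one] at hsum
  have hdvd : 2 ∣ hAfin.toFinset.card := (ZMod.natCast_eq_zero_iff _ 2).mp hsum
  rw [hOPT]
  exact (Nat.modEq_zero_iff_dvd).mpr hdvd
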